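/- Let r > 3, let f ∈ F_∞ attain its minimum f⋆ at x⋆, and let X solve the generalized ODE Ẍ + (r/t)Ẋ + ∇f(X) = 0 with X(0) = x₀, Ẋ(0) = 0. Then for every t > 0, f(X(t)) − f⋆ ≤ (r−1)²‖x₀ − x⋆‖²/(2t²), and moreover ∫₀^∞ t·(f(X(t)) − f⋆) dt ≤ (r−1)²‖x₀ − x⋆‖²/(2(r−3)). -/

import Mathlib

open Set Filter Topology MeasureTheory

noncomputable section

abbrev E (n : ℕ) := EuclideanSpace ℝ (Fin n)

def MemFL (n : ℕ) (L : ℝ) (f : E n → ℝ) : Prop :=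
  ConvexOn ℝ Set.univ f ∧ ContDiff ℝ 1 f ∧
    ∀ x y, ‖gradient f x - gradient f y‖ ≤ L * ‖x - y‖

def MemFInf (n : ℕ) (f : E n → ℝ) : Prop := ∃ L > 0, MemFL n L f

open scoped RealInnerProductSpace

set_option maxHeartbeats 1000000 in
private 
lemma grad_ineq {n : ℕ} (f : E n → ℝ) (hconv : ConvexOn ℝ Set.univ f)
    (hd : Differentiable ℝ f) (x y : E n) :
    f x + ⟪gradient f x, y - x⟫ ≤ f y := by
  set φ : ℝ → ℝ := fun s => f (x + s • (y - x)) with hφ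
  have hφconv : ConvexOn ℝ Set.univ φ := by
    have h := hconv.comp_affineMap (AffineMap.lineMap x y : ℝ →ᵃ[ℝ] E n)
    have h2 : (f ∘ ⇑(AffineMap.lineMap x y)) = φ := by
      funext s; simp [Function.comp, AffineMap.lineMap_apply, φ, add_comm]
    rw [h2] at h; simpa using h
  have hc : HasDerivAt (fun s : ℝ => x + s • (y - x)) (y - x) 0 := by
    simpa using ((hasDerivAt_id (0:ℝ)).smul_const (y - x)).const_add x
  have hgrad : HasGradientAt f (gradient f x) x := (hd x).hasGradientAt
  have hfd : HasFDerivAt f ((InnerProductSpace.toDual ℝ (E n)) (gradient f x)) x := by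
    rwa [hasGradientAt_iff_hasFDerivAt] at hgrad
  have hφd : HasDerivAt φ (⟪gradient f x, y - x⟫) 0 := by
    have hfd' : HasFDerivAt f ((InnerProductSpace.toDual ℝ (E n)) (gradient f x)) ((0:ℝ) • (y-x) + x) := by simpa using hfd
    have hc' : HasDerivAt (fun s : ℝ => s • (y - x) + x) (y - x) 0 := by
      simpa using ((hasDerivAt_id (0:ℝ)).smul_const (y - x)).add_const x
    have := hfd'.comp_hasDerivAt 0 hc'
    simp only [Function.comp_def, add_comm] at this
    simpa [φ, InnerProductSpace.toDual_apply_apply] using this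
  have hslope : (⟪gradient f x, y - x⟫) ≤ slope φ 0 1 :=
    hφconv.le_slope_of_hasDerivWithinAt (Set.mem_univ 0) (Set.mem_univ 1) one_pos
      (hφd.hasDerivWithinAt)
  have : slope φ 0 1 = f y - f x := by
    simp [slope_def_field, φ]
  linarith [hslope.trans_eq this]



/-- A solution of the generalized ODE `Ẍ + (r/t)Ẋ + ∇f(X) = 0`, `X(0) = x₀`, `Ẋ(0) = 0`,
C² on `(0,∞)`, C¹ on `[0,∞)`. -/
def GenNesterovSol (n : ℕ) (r : ℝ) (f : E n → ℝ) (x0 : E n) (X : ℝ → E n) : Prop :=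
  X 0 = x0 ∧
  ContDiffOn ℝ 1 X (Set.Ici 0) ∧
  ContDiffOn ℝ 2 X (Set.Ioi 0) ∧
  derivWithin X (Set.Ici 0) 0 = 0 ∧
  ∀ t > (0:ℝ), deriv (deriv X) t + (r / t) • deriv X t + gradient f (X t) = 0

set_option maxHeartbeats 1000000 in
/-- **Theorem 5 (high friction, continuous time).**  For `r > 3`, the solution `X` of the
generalized ODE satisfies `f(X(t)) - f⋆ ≤ (r-1)²‖x₀-x⋆‖²/(2t²)` and
`∫₀^∞ t (f(X(t)) - f⋆) dt ≤ (r-1)²‖x₀-x⋆‖²/(2(r-3))`. -/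
theorem gen_ode_high_friction (n : ℕ) (r : ℝ) (hr : 3 < r)
    (f : E n → ℝ) (hf : MemFInf n f)
    (xstar : E n) (hmin : IsMinOn f Set.univ xstar)
    (x0 : E n) (X : ℝ → E n) (hX : GenNesterovSol n r f x0 X) :
    (∀ t > (0:ℝ), f (X t) - f xstar ≤ (r - 1) ^ 2 * ‖x0 - xstar‖ ^ 2 / (2 * t ^ 2)) ∧
    IntegrableOn (fun t => t * (f (X t) - f xstar)) (Set.Ioi 0) ∧
    ∫ t in Set.Ioi (0:ℝ), t * (f (X t) - f xstar) ≤
      (r - 1) ^ 2 * ‖x0 - xstar‖ ^ 2 / (2 * (r - 3)) := by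
  obtain ⟨L, hL, hconv, hsm, -⟩ := hf
  obtain ⟨hX0, hC1, hC2, hD0, hODE⟩ := hX

  have hr1 : (0:ℝ) < r - 1 := by linarith
  have hfd : Differentiable ℝ f := hsm.differentiable one_ne_zero
  set X' : ℝ → E n := derivWithin X (Set.Ici 0) with hX'def
  set g : ℝ → ℝ := fun t => f (X t) - f xstar with hgdef
  set V : ℝ → E n := fun t => X t + ((r-1)⁻¹ * t) • X' t - xstar with hVdef
  set Efun : ℝ → ℝ := fun t => (2/(r-1)) * (t^2 * g t) + (r-1) * ⟪V t, V t⟫ with hEdef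
  set e' : ℝ → ℝ := fun t => (4*t/(r-1)) * g t - 2*t*⟪gradient f (X t), X t - xstar⟫ with he'def
  -- basic continuity
  have hXc : ContinuousOn X (Set.Ici 0) := hC1.continuousOn
  have hX'c : ContinuousOn X' (Set.Ici 0) :=
    hC1.continuousOn_derivWithin (uniqueDiffOn_Ici 0) (le_refl 1)
  have hgradc : Continuous (gradient f) := by
    have : gradient f = fun x => (InnerProductSpace.toDual ℝ (E n)).symm (fderiv ℝ f x) := rfl
    rw [this]
    exact (InnerProductSpace.toDual ℝ (E n)).symm.continuous.comp
      (hsm.continuous_fderiv one_ne_zero)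
  have hgc : ContinuousOn g (Set.Ici 0) := ((hsm.continuous).comp_continuousOn hXc).sub continuousOn_const
  have hVc : ContinuousOn V (Set.Ici 0) := by
    apply ContinuousOn.sub _ continuousOn_const
    exact hXc.add ((continuousOn_const.mul continuousOn_id).smul hX'c)
  have hEc : ContinuousOn Efun (Set.Ici 0) := by
    apply ContinuousOn.add
    · exact continuousOn_const.mul ((continuousOn_pow 2).mul hgc)
    · exact continuousOn_const.mul (hVc.inner hVc)
  have he'c : ContinuousOn e' (Set.Ici 0) := by
    apply ContinuousOn.sub
    · exact (continuousOn_const.mul continuousOn_id |>.div_const _).mul hgc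
    · exact (continuousOn_const.mul continuousOn_id).mul
        (((hgradc.comp_continuousOn hXc)).inner (hXc.sub continuousOn_const))
  -- derivatives for t > 0
  have hXd : ∀ t > (0:ℝ), HasDerivAt X (X' t) t := by
    intro t ht
    have hmem : Set.Ici (0:ℝ) ∈ 𝓝 t := Ici_mem_nhds ht
    have := (hC1.differentiableOn one_ne_zero t (le_of_lt ht)).differentiableAt hmem
    have h2 : X' t = deriv X t := derivWithin_of_mem_nhds hmem
    rw [h2]; exact this.hasDerivAt
  have hX'eq : ∀ t > (0:ℝ), X' t = deriv X t := fun t ht =>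
    derivWithin_of_mem_nhds (Ici_mem_nhds ht)
  have hX'd : ∀ t > (0:ℝ), HasDerivAt X' (deriv (deriv X) t) t := by
    intro t ht
    have hdd : HasDerivAt (deriv X) (deriv (deriv X) t) t := by
      have h1 : ContDiffOn ℝ 1 (derivWithin X (Set.Ioi 0)) (Set.Ioi 0) :=
        hC2.derivWithin (uniqueDiffOn_Ioi 0) (by norm_num)
      have h2 : Set.EqOn (derivWithin X (Set.Ioi 0)) (deriv X) (Set.Ioi 0) :=
        fun s hs => derivWithin_of_isOpen isOpen_Ioi hs
      have h3 : ContDiffOn ℝ 1 (deriv X) (Set.Ioi 0) := h1.congr h2.symm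
      have := (h3.differentiableOn one_ne_zero t ht).differentiableAt (Ioi_mem_nhds ht)
      exact this.hasDerivAt
    apply hdd.congr_of_eventuallyEq
    filter_upwards [Ioi_mem_nhds ht] with s hs
    exact hX'eq s hs
  -- chain rule for f ∘ X
  have hfC : ∀ t > (0:ℝ), HasDerivAt (fun s => f (X s)) ⟪gradient f (X t), X' t⟫ t := by
    intro t ht
    have hfd' : HasFDerivAt f ((InnerProductSpace.toDual ℝ (E n)) (gradient f (X t))) (X t) := by
      rw [← hasGradientAt_iff_hasFDerivAt]; exact (hfd (X t)).hasGradientAt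
    have := hfd'.comp_hasDerivAt t (hXd t ht)
    simpa [Function.comp_def, InnerProductSpace.toDual_apply_apply] using this
  -- derivative of V
  have hVd : ∀ t > (0:ℝ), HasDerivAt V (-(((r-1)⁻¹ * t)) • gradient f (X t)) t := by
    intro t ht
    have ht0 : t ≠ 0 := ne_of_gt ht
    have hcd : HasDerivAt (fun s : ℝ => (r-1)⁻¹ * s) ((r-1)⁻¹) t := by
      simpa using (hasDerivAt_id t).const_mul ((r-1)⁻¹)
    have h0 : HasDerivAt V (X' t + (((r-1)⁻¹ * t) • deriv (deriv X) t + (r-1)⁻¹ • X' t)) t :=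
      ((hXd t ht).add (hcd.smul (hX'd t ht))).sub_const xstar
    have hode := hODE t ht
    rw [← hX'eq t ht] at hode
    have hddx : deriv (deriv X) t = -((r/t) • X' t + gradient f (X t)) := by
      rw [eq_neg_iff_add_eq_zero, ← add_assoc]; exact hode
    rw [hddx] at h0
    convert h0 using 1
    match_scalars <;> field_simp <;> ring
  -- derivative of Efun
  have hEd : ∀ t > (0:ℝ), HasDerivAt Efun (e' t) t := by
    intro t ht
    have hgd : HasDerivAt g ⟪gradient f (X t), X' t⟫ t := (hfC t ht).sub_const (f xstar)
    have h1 : HasDerivAt (fun s : ℝ => s^2 * g s)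
        ((↑2 * t^1) * g t + t^2 * ⟪gradient f (X t), X' t⟫) t :=
      (hasDerivAt_pow 2 t).mul hgd
    have h2 : HasDerivAt (fun s => ⟪V s, V s⟫)
        (⟪V t, -(((r-1)⁻¹ * t)) • gradient f (X t)⟫ +
         ⟪-(((r-1)⁻¹ * t)) • gradient f (X t), V t⟫) t :=
      (hVd t ht).inner ℝ (hVd t ht)
    have h3 := (h1.const_mul (2/(r-1))).add (h2.const_mul (r-1))
    convert h3 using 1
    · rfl
    · rfl
    · rfl
    simp only [he'def, hVdef, real_inner_smul_left, real_inner_smul_right, inner_add_left,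
      inner_add_right, inner_sub_left, inner_sub_right, real_inner_comm (X t)]
    have ht0 : t ≠ 0 := ne_of_gt ht
    have h4 : ⟪X' t, gradient f (X t)⟫ = ⟪gradient f (X t), X' t⟫ := real_inner_comm _ _
    have h5 : ⟪xstar, gradient f (X t)⟫ = ⟪gradient f (X t), xstar⟫ := real_inner_comm _ _
    have h6 : ⟪X t, gradient f (X t)⟫ = ⟪gradient f (X t), X t⟫ := real_inner_comm _ _
    rw [h4, h5, h6]
    field_simp
    ring
  -- nonnegativity and key inequalities
  have hg0 : ∀ t, 0 ≤ g t := fun t => sub_nonneg.2 (hmin (Set.mem_univ (X t)))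
  have hip : ∀ t, g t ≤ ⟪gradient f (X t), X t - xstar⟫ := by
    intro t
    have := grad_ineq f hconv hfd (X t) xstar
    have h2 : ⟪gradient f (X t), xstar - X t⟫ = -⟪gradient f (X t), X t - xstar⟫ := by
      rw [← inner_neg_right]; congr 1; abel
    rw [h2] at this
    have h3 : f (X t) - f xstar ≤ ⟪gradient f (X t), X t - xstar⟫ := by linarith
    exact h3
  set c : ℝ := 2*(r-3)/(r-1) with hcdef
  have hc : 0 < c := by apply div_pos <;> linarith
  have he'le : ∀ t > (0:ℝ), e' t ≤ -(c * (t * g t)) := by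
    intro t ht
    have h1 := hip t
    have h2 := hg0 t
    have key : (r-1) * e' t ≤ (r-1) * (-(c * (t * g t))) := by
      have hcc : (r-1) * c = 2*(r-3) := by rw [hcdef]; field_simp
      have hL : (r-1) * e' t = 4*t*(g t) - 2*t*(r-1)*⟪gradient f (X t), X t - xstar⟫ := by
        simp only [he'def]; field_simp
      rw [hL]
      have : (r-1) * (-(c * (t * g t))) = -(2*(r-3)*(t * g t)) := by rw [← hcc]; ring
      rw [this]
      nlinarith [mul_le_mul_of_nonneg_left h1 (le_of_lt (mul_pos ht hr1))]
    exact le_of_mul_le_mul_left (by linarith) hr1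
  have he'nonpos : ∀ t > (0:ℝ), e' t ≤ 0 := by
    intro t ht
    have := he'le t ht
    have h2 : 0 ≤ c * (t * g t) := mul_nonneg hc.le (mul_nonneg ht.le (hg0 t))
    linarith
  -- E is antitone on [0, ∞)
  have hanti : AntitoneOn Efun (Set.Ici 0) := by
    apply antitoneOn_of_deriv_nonpos (convex_Ici 0) hEc
    · rw [interior_Ici]
      exact fun x hx => ((hEd x hx).differentiableAt).differentiableWithinAt
    · rw [interior_Ici]
      intro x hx
      rw [(hEd x hx).deriv]
      exact he'nonpos x hx
  have hE0 : Efun 0 = (r-1) * ‖x0 - xstar‖^2 := by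
    have hV0 : V 0 = x0 - xstar := by
      simp [hVdef, hX0]
    simp only [hEdef, hV0, real_inner_self_eq_norm_sq]
    ring
  have hEnn : ∀ t ∈ Set.Ici (0:ℝ), 0 ≤ Efun t := by
    intro t ht
    have h1 : (0:ℝ) ≤ 2/(r-1) * (t^2 * g t) :=
      mul_nonneg (div_nonneg (by norm_num) hr1.le) (mul_nonneg (sq_nonneg t) (hg0 t))
    have h2 : (0:ℝ) ≤ (r-1) * ⟪V t, V t⟫ :=
      mul_nonneg (le_of_lt hr1) real_inner_self_nonneg
    simp only [hEdef]; linarith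
  -- pointwise bound
  have hpt : ∀ t > (0:ℝ), f (X t) - f xstar ≤ (r - 1) ^ 2 * ‖x0 - xstar‖ ^ 2 / (2 * t ^ 2) := by
    intro t ht
    have h1 : Efun t ≤ Efun 0 := hanti (le_refl (0:ℝ)) (le_of_lt ht) (le_of_lt ht)
    have h2 : 2/(r-1) * (t^2 * g t) ≤ Efun t := by
      have : (0:ℝ) ≤ (r-1) * ⟪V t, V t⟫ := mul_nonneg (le_of_lt hr1) real_inner_self_nonneg
      simp only [hEdef]; linarith
    have h3 : 2/(r-1) * (t^2 * g t) ≤ (r-1) * ‖x0 - xstar‖^2 := by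
      rw [hE0] at h1; exact h2.trans h1
    have h4 := mul_le_mul_of_nonneg_left h3 (le_of_lt hr1)
    have hL : (r-1) * (2/(r-1) * (t^2 * g t)) = 2*(t^2 * g t) := by field_simp
    rw [hL] at h4
    rw [le_div_iff₀ (by positivity : (0:ℝ) < 2 * t^2)]
    have h5 : g t * (2 * t^2) ≤ (r-1)^2 * ‖x0 - xstar‖^2 := by nlinarith [h4]
    exact h5
  -- FTC bound on finite intervals
  have hbound : ∀ T : ℝ, 0 ≤ T → (∫ t in (0:ℝ)..T, t * g t) ≤ Efun 0 / c := by
    intro T hT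
    have hIccIci : Set.Icc (0:ℝ) T ⊆ Set.Ici 0 := fun x hx => hx.1
    have huIcc : Set.uIcc (0:ℝ) T = Set.Icc 0 T := Set.uIcc_of_le hT
    have hEint : IntervalIntegrable e' volume 0 T := by
      apply ContinuousOn.intervalIntegrable
      rw [huIcc]; exact he'c.mono hIccIci
    have hFTC : ∫ t in (0:ℝ)..T, e' t = Efun T - Efun 0 := by
      apply intervalIntegral.integral_eq_sub_of_hasDeriv_right_of_le hT (hEc.mono hIccIci)
        (fun x hx => ((hEd x hx.1).hasDerivWithinAt)) hEint
    have htg : IntervalIntegrable (fun t => c * (t * g t)) volume 0 T := by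
      apply ContinuousOn.intervalIntegrable
      rw [huIcc]
      exact (continuousOn_const.mul (continuousOn_id.mul hgc)).mono hIccIci
    have hmono : (∫ t in (0:ℝ)..T, c * (t * g t)) ≤ ∫ t in (0:ℝ)..T, -(e' t) := by
      apply intervalIntegral.integral_mono_on hT htg hEint.neg
      intro x hx
      simp only [Pi.neg_apply]
      rcases eq_or_lt_of_le hx.1 with h | h
      · subst h
        have : e' 0 = 0 := by simp [he'def]
        simp [this]
      · have := he'le x h
        linarith
    rw [intervalIntegral.integral_neg, hFTC] at hmono
    rw [intervalIntegral.integral_const_mul] at hmono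
    have hET : 0 ≤ Efun T := hEnn T hT
    rw [le_div_iff₀ hc]
    calc (∫ t in (0:ℝ)..T, t * g t) * c = c * ∫ t in (0:ℝ)..T, t * g t := by ring
      _ ≤ -(Efun T - Efun 0) := hmono
      _ ≤ Efun 0 := by linarith
  -- integrability on Ioi 0
  have htgcont : ∀ T : ℝ, 0 ≤ T → IntegrableOn (fun t => t * g t) (Set.Ioc 0 T) := by
    intro T hT
    have : IntegrableOn (fun t => t * g t) (Set.Icc 0 T) := by
      apply ContinuousOn.integrableOn_Icc
      exact (continuousOn_id.mul hgc).mono (fun x hx => hx.1)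
    exact this.mono_set Set.Ioc_subset_Icc_self
  have hnorm : ∀ i : ℕ, (∫ x in (0:ℝ)..(i:ℝ), ‖x * g x‖) ≤ Efun 0 / c := by
    intro i
    have hi : (0:ℝ) ≤ (i:ℝ) := Nat.cast_nonneg i
    have heq : (∫ x in (0:ℝ)..(i:ℝ), ‖x * g x‖) = ∫ x in (0:ℝ)..(i:ℝ), x * g x := by
      rw [intervalIntegral.integral_of_le hi, intervalIntegral.integral_of_le hi]
      apply setIntegral_congr_fun measurableSet_Ioc
      intro x hx
      show ‖x * g x‖ = x * g x
      rw [Real.norm_eq_abs, abs_of_nonneg (mul_nonneg (le_of_lt hx.1) (hg0 x))]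
    rw [heq]
    exact hbound _ hi
  have hint : IntegrableOn (fun t => t * g t) (Set.Ioi (0:ℝ)) := by
    apply MeasureTheory.integrableOn_Ioi_of_intervalIntegral_norm_bounded (Efun 0 / c) 0
      (fun i : ℕ => htgcont (i:ℝ) (Nat.cast_nonneg i)) tendsto_natCast_atTop_atTop
    exact Filter.Eventually.of_forall hnorm
  have hfinal : (∫ t in Set.Ioi (0:ℝ), t * g t) ≤ Efun 0 / c := by
    have htend := MeasureTheory.intervalIntegral_tendsto_integral_Ioi 0 hint
      (tendsto_natCast_atTop_atTop (R := ℝ))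
    apply le_of_tendsto htend
    apply Filter.Eventually.of_forall
    intro i
    exact hbound _ (Nat.cast_nonneg i)
  have hcbd : Efun 0 / c = (r - 1) ^ 2 * ‖x0 - xstar‖ ^ 2 / (2 * (r - 3)) := by
    rw [hE0, hcdef]
    have h3 : r - 3 ≠ 0 := by linarith
    have h1 : r - 1 ≠ 0 := by linarith
    field_simp
  refine ⟨hpt, hint, ?_⟩
  rw [← hcbd]
  exact hfinal
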